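/- arXiv:1410.6204 — 3 statements merged into one kernel-verified Lean document; each statement's English description precedes it below -/
import Mathlib

section
/- Let S_n be the star graph on n ≥ 2 vertices and let 1 < p < ∞. Then (1 + (n-1)/2^p)^{1/p} ≤ ‖M_{S_n}‖_p ≤ ((n+5)/2)^{1/p}. In particular ‖M_{S_n}‖_p is comparable to n^{1/p}, with implied constants independent of n. -/
open scoped Classical
open Finset

noncomputable section

variable {V : Type*} [Fintype V]

/-- metric ball of radius `r` centered at `v` in the graph `G` -/
def gBall (G : SimpleGraph V) (v : V) (r : ℕ) : Finset V :=
  Finset.univ.filter fun w => G.dist v w ≤ r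

/-- Hardy–Littlewood maximal operator on the graph `G` -/
def maxOp (G : SimpleGraph V) (f : V → ℝ) (v : V) : ℝ :=
  ⨆ k : Fin (Fintype.card V), (∑ w ∈ gBall G v k.1, |f w|) / ((gBall G v k.1).card : ℝ)

/-- ℓ^p (quasi)norm of a function on the vertices -/
def pNorm (p : ℝ) (f : V → ℝ) : ℝ := (∑ v, |f v| ^ p) ^ (1 / p)

/-- operator (quasi)norm of the maximal operator of `G` on ℓ^p -/
def opNorm (G : SimpleGraph V) (p : ℝ) : ℝ :=
  ⨆ f : {f : V → ℝ // f ≠ 0}, pNorm p (maxOp G f.1) / pNorm p f.1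

/-- weak ℓ^p norm -/
def wNorm (p : ℝ) (f : V → ℝ) : ℝ :=
  ⨆ t : {t : ℝ // 0 < t},
    t.1 * ((Finset.univ.filter fun v => t.1 < |f v|).card : ℝ) ^ (1 / p)

/-- weak-type operator norm of the maximal operator of `G` -/
def wOpNorm (G : SimpleGraph V) (p : ℝ) : ℝ :=
  ⨆ f : {f : V → ℝ // f ≠ 0}, wNorm p (maxOp G f.1) / pNorm p f.1

/-- maximal operator over all graphs on `V` isomorphic to `G` -/
def maxOpIso (G : SimpleGraph V) (f : V → ℝ) (j : V) : ℝ :=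
  ⨆ H : {H : SimpleGraph V // Nonempty (H ≃g G)}, maxOp H.1 f j

/-- operator norm of `maxOpIso` on ℓ^p -/
def opNormIso (G : SimpleGraph V) (p : ℝ) : ℝ :=
  ⨆ f : {f : V → ℝ // f ≠ 0}, pNorm p (maxOpIso G f.1) / pNorm p f.1

/-- Kronecker delta at `k` -/
def kdelta (k : V) : V → ℝ := fun j => if j = k then 1 else 0

/-- star graph on `Fin n` with center `0` -/
def starGraph (n : ℕ) : SimpleGraph (Fin n) :=
  SimpleGraph.fromRel fun i _ => i.1 = 0

/-- diameter of a graph -/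
def gDiam (G : SimpleGraph V) : ℕ :=
  Finset.univ.sup fun p : V × V => G.dist p.1 p.2

/-- dilation index of a graph -/
def dilIndex (G : SimpleGraph V) : ℝ :=
  ⨆ x : V, ⨆ r : {r : ℕ // r ≤ gDiam G},
    ((gBall G x (3 * r.1)).card : ℝ) / ((gBall G x r.1).card : ℝ)

/-- overlapping index of a graph -/
def overlapIndex (G : SimpleGraph V) : ℕ :=
  sInf { r : ℕ | ∀ J : Finset (V × ℕ), ∃ I ⊆ J,
    J.biUnion (fun j => gBall G j.1 j.2) = I.biUnion (fun i => gBall G i.1 i.2) ∧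
    ∀ v : V, (I.filter fun i => v ∈ gBall G i.1 i.2).card ≤ r }

section starlemmas

variable {n : ℕ} [NeZero n]

private lemma star_adj (hn : 2 ≤ n) {i j : Fin n} :
    (starGraph n).Adj i j ↔ i ≠ j ∧ (i = 0 ∨ j = 0) := by
  simp [starGraph, SimpleGraph.fromRel_adj, ← Fin.val_eq_zero_iff, or_comm]

private lemma star_walk (hn : 2 ≤ n) (v w : Fin n) :
    ∃ q : (starGraph n).Walk v w, q.length ≤ 2 := by
  by_cases hvw : v = w
  · subst hvw; exact ⟨SimpleGraph.Walk.nil, by simp⟩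
  by_cases hv : v = 0
  · exact ⟨((star_adj hn).2 ⟨hvw, Or.inl hv⟩).toWalk, by simp [SimpleGraph.Adj.toWalk]⟩
  by_cases hw : w = 0
  · exact ⟨((star_adj hn).2 ⟨hvw, Or.inr hw⟩).toWalk, by simp [SimpleGraph.Adj.toWalk]⟩
  · exact ⟨SimpleGraph.Walk.cons ((star_adj hn).2 ⟨hv, Or.inr rfl⟩)
      ((star_adj hn).2 ⟨Ne.symm hw, Or.inl rfl⟩).toWalk, by simp [SimpleGraph.Adj.toWalk]⟩

private lemma star_dist_le_two (hn : 2 ≤ n) (v w : Fin n) :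
    (starGraph n).dist v w ≤ 2 := by
  obtain ⟨q, hq⟩ := star_walk hn v w
  exact le_trans (SimpleGraph.dist_le q) hq

private lemma star_dist_eq_zero (hn : 2 ≤ n) {v w : Fin n} :
    (starGraph n).dist v w = 0 ↔ v = w := by
  constructor
  · intro h
    obtain ⟨q, _⟩ := star_walk hn v w
    rcases (SimpleGraph.dist_eq_zero_iff_eq_or_not_reachable).1 h with h1 | h2
    · exact h1
    · exact absurd ⟨q⟩ h2
  · rintro rfl; exact SimpleGraph.dist_self

private lemma ball_zero (hn : 2 ≤ n) (v : Fin n) :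
    gBall (starGraph n) v 0 = {v} := by
  ext w
  simp [gBall, Nat.le_zero, star_dist_eq_zero hn, eq_comm]

private lemma ball_univ (hn : 2 ≤ n) (v : Fin n) {r : ℕ} (hr : 2 ≤ r) :
    gBall (starGraph n) v r = Finset.univ := by
  ext w
  simp only [gBall, Finset.mem_filter, Finset.mem_univ, true_and, iff_true]
  exact le_trans (star_dist_le_two hn v w) hr

private lemma ball_center (hn : 2 ≤ n) {r : ℕ} (hr : 1 ≤ r) :
    gBall (starGraph n) (0 : Fin n) r = Finset.univ := by
  ext w
  simp only [gBall, Finset.mem_filter, Finset.mem_univ, true_and, iff_true]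
  by_cases hw : w = 0
  · subst hw; simp [SimpleGraph.dist_self]
  · have : (starGraph n).dist 0 w = 1 :=
      SimpleGraph.dist_eq_one_iff_adj.2 ((star_adj hn).2 ⟨Ne.symm hw, Or.inl rfl⟩)
    omega

private lemma ball_leaf (hn : 2 ≤ n) {v : Fin n} (hv : v ≠ 0) :
    gBall (starGraph n) v 1 = {v, 0} := by
  ext w
  simp only [gBall, Finset.mem_filter, Finset.mem_univ, true_and, Finset.mem_insert,
    Finset.mem_singleton]
  constructor
  · intro h
    interval_cases hd : (starGraph n).dist v w
    · exact Or.inl ((star_dist_eq_zero hn).1 hd).symm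
    · have := (SimpleGraph.dist_eq_one_iff_adj.1 hd)
      rcases ((star_adj hn).1 this).2 with h0 | h0
      · exact absurd h0 hv
      · exact Or.inr h0
  · rintro (rfl | rfl)
    · simp [SimpleGraph.dist_self]
    · exact le_of_eq (SimpleGraph.dist_eq_one_iff_adj.2 ((star_adj hn).2 ⟨hv, Or.inr rfl⟩))

end starlemmas

section maxop

private lemma maxOp_nonneg {V : Type*} [Fintype V] (G : SimpleGraph V) (f : V → ℝ) (v : V) :
    0 ≤ maxOp G f v := by
  haveI : Nonempty V := ⟨v⟩
  have h0 : (0:ℕ) < Fintype.card V := Fintype.card_pos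
  refine le_trans ?_ (le_ciSup (Set.Finite.bddAbove (Set.finite_range _)) (⟨0, h0⟩ : Fin _))
  positivity

private lemma maxOp_ge {V : Type*} [Fintype V] (G : SimpleGraph V) (f : V → ℝ) (v : V)
    (k : Fin (Fintype.card V)) :
    (∑ w ∈ gBall G v k.1, |f w|) / ((gBall G v k.1).card : ℝ) ≤ maxOp G f v := by
  exact le_ciSup (f := fun k : Fin (Fintype.card V) =>
    (∑ w ∈ gBall G v k.1, |f w|) / ((gBall G v k.1).card : ℝ))
    (Set.Finite.bddAbove (Set.finite_range _)) k

variable {n : ℕ} [NeZero n]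

private lemma term_le (hn : 2 ≤ n) (f : Fin n → ℝ) (v : Fin n) (k : ℕ) :
    (∑ w ∈ gBall (starGraph n) v k, |f w|) / ((gBall (starGraph n) v k).card : ℝ) ≤
      max (|f v|) (max ((|f v| + |f 0|) / 2) ((∑ w, |f w|) / (n : ℝ))) := by
  have hS : (∑ w ∈ (Finset.univ : Finset (Fin n)), |f w|) / ((Finset.univ : Finset (Fin n)).card : ℝ)
      = (∑ w, |f w|) / (n : ℝ) := by
    rw [Finset.card_univ, Fintype.card_fin]
  rcases Nat.lt_or_ge k 1 with hk | hk
  · have hk0 : k = 0 := by omega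
    subst hk0
    rw [ball_zero hn v]
    simp only [Finset.sum_singleton, Finset.card_singleton, Nat.cast_one, div_one]
    exact le_max_left _ _
  rcases Nat.lt_or_ge k 2 with hk2 | hk2
  · have hk1 : k = 1 := by omega
    subst hk1
    by_cases hv : v = 0
    · subst hv
      rw [ball_center hn le_rfl, hS]
      exact le_max_of_le_right (le_max_right _ _)
    · rw [ball_leaf hn hv, Finset.sum_pair hv, Finset.card_pair hv]
      exact le_max_of_le_right (le_max_left _ _)
  · rw [ball_univ hn v hk2, hS]
    exact le_max_of_le_right (le_max_right _ _)

private lemma maxOp_le (hn : 2 ≤ n) (f : Fin n → ℝ) (v : Fin n) :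
    maxOp (starGraph n) f v ≤
      max (|f v|) (max ((|f v| + |f 0|) / 2) ((∑ w, |f w|) / (n : ℝ))) := by
  haveI : Nonempty (Fin (Fintype.card (Fin n))) := by
    rw [Fintype.card_fin]; exact ⟨⟨0, by omega⟩⟩
  exact ciSup_le fun k => term_le hn f v k.1

private lemma pNorm_pos {V : Type*} [Fintype V] {p : ℝ} (hp : 0 < p) {f : V → ℝ} (hf : f ≠ 0) :
    0 < pNorm p f := by
  obtain ⟨v, hv⟩ := Function.ne_iff.1 hf
  have : (0:ℝ) < ∑ w, |f w| ^ p := by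
    refine Finset.sum_pos' (fun w _ => Real.rpow_nonneg (abs_nonneg _) p) ⟨v, Finset.mem_univ v, ?_⟩
    exact Real.rpow_pos_of_pos (abs_pos.2 hv) p
  exact Real.rpow_pos_of_pos this _

end maxop

section bounds

private lemma jensen_two {p : ℝ} (hp : 1 ≤ p) {a b : ℝ} (ha : 0 ≤ a) (hb : 0 ≤ b) :
    ((a + b) / 2) ^ p ≤ (a ^ p + b ^ p) / 2 := by
  have := Real.rpow_arith_mean_le_arith_mean_rpow (Finset.univ : Finset (Fin 2))
    (fun _ => (1:ℝ)/2) (fun i => if i = 0 then a else b)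
    (fun i _ => by norm_num)
    (by simp [Fin.sum_univ_two])
    (fun i _ => by by_cases h : i = 0 <;> simp [h, ha, hb]) hp
  have h2 : (a * 2⁻¹ + b * 2⁻¹) ^ p ≤ a ^ p * 2⁻¹ + b ^ p * 2⁻¹ := by
    simpa [Fin.sum_univ_two, mul_comm, mul_one_div] using this
  calc ((a + b) / 2) ^ p = (a * 2⁻¹ + b * 2⁻¹) ^ p := by ring_nf
    _ ≤ a ^ p * 2⁻¹ + b ^ p * 2⁻¹ := h2
    _ = (a ^ p + b ^ p) / 2 := by ring

private lemma jensen_n {n : ℕ} (hn : 2 ≤ n) {p : ℝ} (hp : 1 ≤ p) (f : Fin n → ℝ) :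
    (n : ℝ) * (((∑ w, |f w|) / (n : ℝ)) ^ p) ≤ ∑ w, |f w| ^ p := by
  have hn0 : (0:ℝ) < (n:ℝ) := by positivity
  have := Real.rpow_arith_mean_le_arith_mean_rpow (Finset.univ : Finset (Fin n))
    (fun _ => (1:ℝ)/n) (fun w => |f w|)
    (fun i _ => by positivity)
    (by simp [Finset.card_univ, Fintype.card_fin]; field_simp)
    (fun i _ => abs_nonneg _) hp
  have h1 : (∑ i : Fin n, (1:ℝ)/n * |f i|) = (∑ w, |f w|) / n := by
    rw [Finset.sum_div]
    exact Finset.sum_congr rfl fun i _ => by ring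
  have h2 : (∑ i : Fin n, (1:ℝ)/n * |f i| ^ p) = (∑ w, |f w| ^ p) / n := by
    rw [Finset.sum_div]
    exact Finset.sum_congr rfl fun i _ => by ring
  rw [h1, h2] at this
  calc (n:ℝ) * (((∑ w, |f w|) / (n:ℝ)) ^ p) ≤ (n:ℝ) * ((∑ w, |f w| ^ p) / n) :=
        mul_le_mul_of_nonneg_left this (le_of_lt hn0)
    _ = ∑ w, |f w| ^ p := by field_simp

end bounds

section mainlemmas

variable {n : ℕ} [NeZero n]

private lemma sum_maxOp_le (hn : 2 ≤ n) {p : ℝ} (hp : 1 ≤ p) (f : Fin n → ℝ) :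
    ∑ v, |maxOp (starGraph n) f v| ^ p ≤ (((n:ℝ) + 5) / 2) * ∑ v, |f v| ^ p := by
  have hp0 : 0 ≤ p := le_trans zero_le_one hp
  set A : ℝ := (∑ w, |f w|) / (n : ℝ) with hA
  have hA0 : 0 ≤ A := by positivity
  have hpt : ∀ v : Fin n, |maxOp (starGraph n) f v| ^ p ≤
      |f v| ^ p + (|f v| ^ p + |f 0| ^ p) / 2 + A ^ p := by
    intro v
    have h0 := maxOp_nonneg (starGraph n) f v
    rw [abs_of_nonneg h0]
    have hle : maxOp (starGraph n) f v ^ p ≤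
        (max (|f v|) (max ((|f v| + |f 0|) / 2) A)) ^ p :=
      Real.rpow_le_rpow h0 (maxOp_le hn f v) hp0
    refine le_trans hle ?_
    have e1 : (0:ℝ) ≤ |f v| ^ p := Real.rpow_nonneg (abs_nonneg _) p
    have e2 : (0:ℝ) ≤ |f 0| ^ p := Real.rpow_nonneg (abs_nonneg _) p
    have e3 : (0:ℝ) ≤ A ^ p := Real.rpow_nonneg hA0 p
    have e4 : ((|f v| + |f 0|) / 2) ^ p ≤ (|f v| ^ p + |f 0| ^ p) / 2 :=
      jensen_two hp (abs_nonneg _) (abs_nonneg _)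
    rcases max_cases (|f v|) (max ((|f v| + |f 0|) / 2) A) with ⟨h, _⟩ | ⟨h, _⟩
    · rw [h]; linarith
    · rcases max_cases ((|f v| + |f 0|) / 2) A with ⟨h', _⟩ | ⟨h', _⟩
      · rw [h, h']; linarith
      · rw [h, h']; linarith
  have hsum := Finset.sum_le_sum (fun v (_ : v ∈ Finset.univ) => hpt v)
  have hT0 : (0:ℝ) ≤ ∑ v, |f v| ^ p :=
    Finset.sum_nonneg fun v _ => Real.rpow_nonneg (abs_nonneg _) p
  have h1 : |f (0:Fin n)| ^ p ≤ ∑ v, |f v| ^ p :=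
    Finset.single_le_sum (fun v _ => Real.rpow_nonneg (abs_nonneg _) p) (Finset.mem_univ 0)
  have h2 : (n:ℝ) * A ^ p ≤ ∑ v, |f v| ^ p := jensen_n hn hp f
  have hb : ∑ _v : Fin n, (|f _v| ^ p + |f 0| ^ p) / 2
      = ((∑ v, |f v| ^ p) + (n:ℝ) * |f 0| ^ p) / 2 := by
    rw [← Finset.sum_div, Finset.sum_add_distrib, Finset.sum_const, Finset.card_univ,
      Fintype.card_fin, nsmul_eq_mul]
  have hc : ∑ _v : Fin n, A ^ p = (n:ℝ) * A ^ p := by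
    rw [Finset.sum_const, Finset.card_univ, Fintype.card_fin, nsmul_eq_mul]
  rw [Finset.sum_add_distrib, Finset.sum_add_distrib, hb, hc] at hsum
  have hn2 : (2:ℝ) ≤ (n:ℝ) := by exact_mod_cast hn
  have h3 : (n:ℝ) * |f 0| ^ p ≤ (n:ℝ) * ∑ v, |f v| ^ p :=
    mul_le_mul_of_nonneg_left h1 (by positivity)
  linarith

private lemma pNorm_maxOp_le (hn : 2 ≤ n) {p : ℝ} (hp : 1 < p) (f : Fin n → ℝ) :
    pNorm p (maxOp (starGraph n) f) ≤ (((n:ℝ) + 5) / 2) ^ (1/p) * pNorm p f := by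
  have hb : (0:ℝ) ≤ ((n:ℝ) + 5) / 2 := by positivity
  have hT0 : (0:ℝ) ≤ ∑ v, |f v| ^ p :=
    Finset.sum_nonneg fun v _ => Real.rpow_nonneg (abs_nonneg _) p
  have hM0 : (0:ℝ) ≤ ∑ v, |maxOp (starGraph n) f v| ^ p :=
    Finset.sum_nonneg fun v _ => Real.rpow_nonneg (abs_nonneg _) p
  unfold pNorm
  calc (∑ v, |maxOp (starGraph n) f v| ^ p) ^ (1/p)
      ≤ ((((n:ℝ) + 5) / 2) * ∑ v, |f v| ^ p) ^ (1/p) :=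
        Real.rpow_le_rpow hM0 (sum_maxOp_le hn (le_of_lt hp) f) (by positivity)
    _ = (((n:ℝ) + 5) / 2) ^ (1/p) * (∑ v, |f v| ^ p) ^ (1/p) := Real.mul_rpow hb hT0

private lemma opNorm_bdd (hn : 2 ≤ n) {p : ℝ} (hp : 1 < p) :
    (((n:ℝ) + 5) / 2) ^ (1/p) ∈ upperBounds (Set.range fun f : {f : Fin n → ℝ // f ≠ 0} =>
      pNorm p (maxOp (starGraph n) f.1) / pNorm p f.1) := by
  rintro x ⟨g, rfl⟩
  dsimp only
  rw [div_le_iff₀ (pNorm_pos (lt_trans zero_lt_one hp) g.2)]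
  exact pNorm_maxOp_le hn hp g.1

private lemma opNorm_star_le (hn : 2 ≤ n) {p : ℝ} (hp : 1 < p) :
    opNorm (starGraph n) p ≤ (((n:ℝ) + 5) / 2) ^ (1/p) := by
  haveI : Nonempty {f : Fin n → ℝ // f ≠ 0} :=
    ⟨⟨fun _ => 1, fun h => by simpa using congrFun h 0⟩⟩
  refine ciSup_le fun f => ?_
  rw [div_le_iff₀ (pNorm_pos (lt_trans zero_lt_one hp) f.2)]
  exact pNorm_maxOp_le hn hp f.1

private lemma opNorm_star_ge (hn : 2 ≤ n) {p : ℝ} (hp : 1 < p) :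
    (1 + ((n:ℝ) - 1) / 2 ^ p) ^ (1/p) ≤ opNorm (starGraph n) p := by
  have hp0 : (0:ℝ) < p := lt_trans zero_lt_one hp
  set f : Fin n → ℝ := kdelta (0 : Fin n) with hfdef
  have hf : f ≠ 0 := fun h => by simpa [hfdef, kdelta] using congrFun h 0
  have hpt : ∀ v : Fin n, |f v| ^ p = if v = 0 then 1 else 0 := fun v => by
    by_cases hv : v = 0 <;>
      simp [hfdef, kdelta, hv, Real.one_rpow, Real.zero_rpow (ne_of_gt hp0)]
  have hnf : pNorm p f = 1 := by
    unfold pNorm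
    rw [Finset.sum_congr rfl (fun v _ => hpt v),
      Finset.sum_ite_eq' Finset.univ (0 : Fin n) (fun _ => (1:ℝ))]
    simp
  have hM0 : (1:ℝ) ≤ maxOp (starGraph n) f 0 := by
    have h := maxOp_ge (starGraph n) f 0 ⟨0, by rw [Fintype.card_fin]; omega⟩
    simpa [ball_zero hn, hfdef, kdelta] using h
  have hMv : ∀ v : Fin n, v ≠ 0 → (1:ℝ)/2 ≤ maxOp (starGraph n) f v := by
    intro v hv
    have h := maxOp_ge (starGraph n) f v ⟨1, by rw [Fintype.card_fin]; omega⟩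
    rw [show ((⟨1, by rw [Fintype.card_fin]; omega⟩ : Fin (Fintype.card (Fin n))) : ℕ) = 1 from rfl,
      ball_leaf hn hv, Finset.sum_pair hv, Finset.card_pair hv] at h
    simpa [hfdef, kdelta, hv] using h
  have h2p : (0:ℝ) < 2 ^ p := Real.rpow_pos_of_pos two_pos p
  have hn1 : (0:ℝ) ≤ (n:ℝ) - 1 := by
    have : (2:ℝ) ≤ (n:ℝ) := by exact_mod_cast hn
    linarith
  have hsum : 1 + ((n:ℝ) - 1) / 2 ^ p ≤ ∑ v, |maxOp (starGraph n) f v| ^ p := by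
    have hsplit := Finset.sum_erase_add Finset.univ
      (fun v => |maxOp (starGraph n) f v| ^ p) (Finset.mem_univ (0 : Fin n))
    have h0p : (1:ℝ) ≤ |maxOp (starGraph n) f 0| ^ p := by
      rw [abs_of_nonneg (maxOp_nonneg _ _ _)]
      calc (1:ℝ) = 1 ^ p := (Real.one_rpow p).symm
        _ ≤ _ := Real.rpow_le_rpow zero_le_one hM0 (le_of_lt hp0)
    have hvp : ∀ v ∈ Finset.univ.erase (0 : Fin n),
        (1:ℝ)/2 ^ p ≤ |maxOp (starGraph n) f v| ^ p := by
      intro v hv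
      have hv0 : v ≠ 0 := Finset.ne_of_mem_erase hv
      rw [abs_of_nonneg (maxOp_nonneg _ _ _)]
      calc (1:ℝ)/2 ^ p = (1/2) ^ p := by
            rw [Real.div_rpow zero_le_one (by norm_num), Real.one_rpow]
        _ ≤ _ := Real.rpow_le_rpow (by norm_num) (hMv v hv0) (le_of_lt hp0)
    have hbound : ((n:ℝ) - 1) / 2 ^ p
        ≤ ∑ v ∈ Finset.univ.erase (0 : Fin n), |maxOp (starGraph n) f v| ^ p := by
      have hs := Finset.sum_le_sum hvp
      rw [Finset.sum_const, Finset.card_erase_of_mem (Finset.mem_univ _), Finset.card_univ,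
        Fintype.card_fin, nsmul_eq_mul, Nat.cast_sub (by omega : 1 ≤ n), Nat.cast_one,
        mul_one_div] at hs
      exact hs
    linarith [hsplit.symm ▸ (by linarith [hbound, h0p] :
      (1:ℝ) + ((n:ℝ) - 1) / 2 ^ p ≤ (∑ v ∈ Finset.univ.erase (0 : Fin n),
        |maxOp (starGraph n) f v| ^ p) + |maxOp (starGraph n) f 0| ^ p)]
  have hnorm : (1 + ((n:ℝ) - 1) / 2 ^ p) ^ (1/p) ≤ pNorm p (maxOp (starGraph n) f) := by
    unfold pNorm
    refine Real.rpow_le_rpow ?_ hsum (by positivity)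
    positivity
  have hbdd : BddAbove (Set.range fun g : {g : Fin n → ℝ // g ≠ 0} =>
      pNorm p (maxOp (starGraph n) g.1) / pNorm p g.1) :=
    ⟨_, opNorm_bdd hn hp⟩
  unfold opNorm
  refine le_trans ?_ (le_ciSup hbdd ⟨f, hf⟩)
  rw [hnf, div_one]
  exact hnorm

end mainlemmas

/-- bounds for the ℓ^p norm of the maximal operator of the star,
for 1 < p < ∞, and its comparability to n^{1/p}. -/
theorem stmt13 :
    (∀ n : ℕ, 2 ≤ n → ∀ p : ℝ, 1 < p →
      (1 + ((n : ℝ) - 1) / 2 ^ p) ^ (1 / p) ≤ opNorm (starGraph n) p ∧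
      opNorm (starGraph n) p ≤ (((n : ℝ) + 5) / 2) ^ (1 / p)) ∧
    ∃ c C : ℝ, 0 < c ∧ 0 < C ∧ ∀ n : ℕ, 2 ≤ n → ∀ p : ℝ, 1 < p →
      c * (n : ℝ) ^ (1 / p) ≤ opNorm (starGraph n) p ∧
      opNorm (starGraph n) p ≤ C * (n : ℝ) ^ (1 / p) := by
  have main : ∀ n : ℕ, 2 ≤ n → ∀ p : ℝ, 1 < p →
      (1 + ((n : ℝ) - 1) / 2 ^ p) ^ (1 / p) ≤ opNorm (starGraph n) p ∧
      opNorm (starGraph n) p ≤ (((n : ℝ) + 5) / 2) ^ (1 / p) := by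
    intro n hn p hp
    haveI : NeZero n := ⟨by omega⟩
    exact ⟨opNorm_star_ge hn hp, opNorm_star_le hn hp⟩
  refine ⟨main, 1/2, 2, by norm_num, by norm_num, fun n hn p hp => ?_⟩
  obtain ⟨hlo, hhi⟩ := main n hn p hp
  have hp0 : (0:ℝ) < p := lt_trans zero_lt_one hp
  have h2p : (0:ℝ) < 2 ^ p := Real.rpow_pos_of_pos two_pos p
  have hn2 : (2:ℝ) ≤ (n:ℝ) := by exact_mod_cast hn
  have hn0 : (0:ℝ) ≤ (n:ℝ) := by linarith
  have hn1 : (0:ℝ) ≤ (n:ℝ) - 1 := by linarith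
  have h2p1 : (1:ℝ) ≤ 2 ^ p := by
    calc (1:ℝ) = 2 ^ (0:ℝ) := (Real.rpow_zero 2).symm
      _ ≤ 2 ^ p := Real.rpow_le_rpow_of_exponent_le one_le_two (le_of_lt hp0)
  have h2p2 : (2:ℝ) ≤ 2 ^ p := by
    calc (2:ℝ) = 2 ^ (1:ℝ) := (Real.rpow_one 2).symm
      _ ≤ 2 ^ p := Real.rpow_le_rpow_of_exponent_le one_le_two (le_of_lt hp)
  have hkey : ((2:ℝ) ^ p) ^ (1/p) = 2 := by
    rw [← Real.rpow_mul (by norm_num : (0:ℝ) ≤ 2), mul_one_div_cancel (ne_of_gt hp0),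
      Real.rpow_one]
  constructor
  · have e1 : 1/2 * (n:ℝ) ^ (1/p) = ((n:ℝ)/2^p) ^ (1/p) := by
      rw [Real.div_rpow hn0 (le_of_lt h2p), hkey]; ring
    have e2 : ((n:ℝ)/2^p) ^ (1/p) ≤ (1 + ((n:ℝ) - 1)/2^p) ^ (1/p) := by
      refine Real.rpow_le_rpow (by positivity) ?_ (by positivity)
      have hd : ((n:ℝ) - 1)/2^p + 1/2^p = (n:ℝ)/2^p := by
        rw [← add_div]; norm_num
      have h1 : (1:ℝ)/2^p ≤ 1 := by
        rw [div_le_one h2p]; exact h2p1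
      linarith
    rw [e1]
    exact le_trans e2 hlo
  · have e1 : (((n:ℝ) + 5) / 2) ^ (1/p) ≤ ((2:ℝ)^p * (n:ℝ)) ^ (1/p) := by
      refine Real.rpow_le_rpow (by positivity) ?_ (by positivity)
      have := mul_le_mul_of_nonneg_right h2p2 hn0
      linarith
    have e2 : ((2:ℝ)^p * (n:ℝ)) ^ (1/p) = 2 * (n:ℝ) ^ (1/p) := by
      rw [Real.mul_rpow (le_of_lt h2p) hn0, hkey]
    rw [← e2]
    exact le_trans hhi e1
end
end

section
/- Let K_n be the complete graph on n ≥ 2 vertices and 0 < p < ∞. Then ‖M_{K_n}‖_{p,∞} = n^{1/p - 1} if 0 < p ≤ 1, and ‖M_{K_n}‖_{p,∞} = 1 if p ≥ 1. Consequently, for every finite simple connected graph G with n vertices, ‖M_G‖_{p,∞} ≥ n^{1/p-1} if 0 < p ≤ 1, and ‖M_G‖_{p,∞} ≥ 1 if p ≥ 1. -/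
open scoped Classical
open Finset

noncomputable section

variable {V : Type*} [Fintype V]

/-! ### Auxiliary lemmas for stmt14 -/

namespace Stmt14Aux

lemma mem_gBall_self (G : SimpleGraph V) (v : V) (r : ℕ) : v ∈ gBall G v r := by
  simp [gBall, SimpleGraph.dist_self]

lemma le_maxOp (G : SimpleGraph V) (f : V → ℝ) (v : V) (k : Fin (Fintype.card V)) :
    (∑ w ∈ gBall G v k.1, |f w|) / ((gBall G v k.1).card : ℝ) ≤ maxOp G f v :=
  le_ciSup (f := fun k : Fin (Fintype.card V) =>
    (∑ w ∈ gBall G v k.1, |f w|) / ((gBall G v k.1).card : ℝ))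
    (Set.finite_range _).bddAbove k

lemma maxOp_nonneg (G : SimpleGraph V) [Nonempty V] (f : V → ℝ) (v : V) :
    0 ≤ maxOp G f v := by
  refine le_trans ?_ (le_maxOp G f v ⟨0, Fintype.card_pos⟩)
  positivity

lemma maxOp_le_sum (G : SimpleGraph V) [Nonempty V] (f : V → ℝ) (v : V) :
    maxOp G f v ≤ ∑ w, |f w| := by
  haveI : Nonempty (Fin (Fintype.card V)) := Fin.pos_iff_nonempty.1 Fintype.card_pos
  refine ciSup_le fun k => ?_
  have h1 : (1:ℝ) ≤ ((gBall G v k.1).card : ℝ) := by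
    exact_mod_cast Finset.card_pos.2 ⟨v, mem_gBall_self G v k.1⟩
  calc (∑ w ∈ gBall G v k.1, |f w|) / ((gBall G v k.1).card : ℝ)
      ≤ ∑ w ∈ gBall G v k.1, |f w| :=
        div_le_self (Finset.sum_nonneg fun w _ => abs_nonneg _) h1
    _ ≤ ∑ w, |f w| := Finset.sum_le_sum_of_subset_of_nonneg (Finset.subset_univ _)
        (fun w _ _ => abs_nonneg _)

lemma gBall_zero {G : SimpleGraph V} (hG : G.Connected) (v : V) : gBall G v 0 = {v} := by
  ext w
  simp only [gBall, Finset.mem_filter, Finset.mem_univ, true_and, Nat.le_zero,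
    hG.dist_eq_zero_iff, Finset.mem_singleton]
  exact eq_comm

lemma gBall_last {G : SimpleGraph V} (hG : G.Connected) (v : V) :
    gBall G v (Fintype.card V - 1) = Finset.univ := by
  ext w
  simp only [gBall, Finset.mem_filter, Finset.mem_univ, true_and, iff_true]
  obtain ⟨q⟩ := hG.preconnected v w
  have h1 : G.dist v w ≤ q.toPath.1.length := SimpleGraph.dist_le _
  have h2 : q.toPath.1.length < Fintype.card V := q.toPath.2.length_lt
  omega

lemma abs_le_maxOp {G : SimpleGraph V} (hG : G.Connected) (f : V → ℝ) (v : V) :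
    |f v| ≤ maxOp G f v := by
  haveI : Nonempty V := ⟨v⟩
  have h := le_maxOp G f v ⟨0, Fintype.card_pos⟩
  rwa [gBall_zero hG, Finset.sum_singleton, Finset.card_singleton, Nat.cast_one, div_one] at h

lemma avg_le_maxOp {G : SimpleGraph V} (hG : G.Connected) (f : V → ℝ) (v : V) :
    (∑ w, |f w|) / (Fintype.card V : ℝ) ≤ maxOp G f v := by
  haveI : Nonempty V := ⟨v⟩
  have h := le_maxOp G f v ⟨Fintype.card V - 1, Nat.sub_lt Fintype.card_pos one_pos⟩
  rwa [gBall_last hG, Finset.card_univ] at h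

lemma gBall_top_pos (v : V) {r : ℕ} (hr : 1 ≤ r) :
    gBall (⊤ : SimpleGraph V) v r = Finset.univ := by
  ext w
  simp only [gBall, Finset.mem_filter, Finset.mem_univ, true_and, iff_true]
  rcases eq_or_ne v w with h | h
  · subst h; simp [SimpleGraph.dist_self]
  · have hd : (⊤ : SimpleGraph V).dist v w = 1 :=
      SimpleGraph.dist_eq_one_iff_adj.2 (by simpa using h)
    omega

lemma maxOp_top_le [Nonempty V] (f : V → ℝ) (v : V) :
    maxOp (⊤ : SimpleGraph V) f v ≤ max |f v| ((∑ w, |f w|) / (Fintype.card V : ℝ)) := by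
  haveI : Nonempty (Fin (Fintype.card V)) := Fin.pos_iff_nonempty.1 Fintype.card_pos
  refine ciSup_le fun k => ?_
  rcases Nat.eq_zero_or_pos k.1 with h | h
  · rw [h, gBall_zero SimpleGraph.connected_top, Finset.sum_singleton, Finset.card_singleton,
      Nat.cast_one, div_one]
    exact le_max_left _ _
  · rw [gBall_top_pos v h, Finset.card_univ]
    exact le_max_right _ _

lemma abs_kdelta (k v : V) : |kdelta k v| = if v = k then 1 else 0 := by
  unfold kdelta; split <;> norm_num

lemma sum_abs_kdelta (k : V) : ∑ v, |kdelta k v| = 1 := by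
  simp [abs_kdelta]

lemma kdelta_ne_zero (k : V) : kdelta k ≠ 0 := fun h => by
  have h2 := congrFun h k
  simp [kdelta] at h2

lemma pNorm_kdelta {p : ℝ} (hp : p ≠ 0) (k : V) : pNorm p (kdelta k) = 1 := by
  have h : ∀ v, |kdelta k v| ^ p = if v = k then 1 else 0 := by
    intro v
    rw [abs_kdelta]
    split
    · exact Real.one_rpow p
    · exact Real.zero_rpow hp
  rw [pNorm]
  simp [h]

lemma pNorm_nonneg (p : ℝ) (f : V → ℝ) : 0 ≤ pNorm p f :=
  Real.rpow_nonneg (Finset.sum_nonneg fun v _ => Real.rpow_nonneg (abs_nonneg _) _) _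

lemma pNorm_pos {p : ℝ} (hp : 0 < p) {f : V → ℝ} (hf : f ≠ 0) : 0 < pNorm p f := by
  obtain ⟨v, hv⟩ : ∃ v, f v ≠ 0 := by
    by_contra h; push_neg at h; exact hf (funext h)
  have h1 : 0 < |f v| ^ p := Real.rpow_pos_of_pos (abs_pos.2 hv) p
  have h2 : |f v| ^ p ≤ ∑ w, |f w| ^ p :=
    Finset.single_le_sum (fun w _ => Real.rpow_nonneg (abs_nonneg _) p) (Finset.mem_univ v)
  exact Real.rpow_pos_of_pos (lt_of_lt_of_le h1 h2) _

lemma abs_le_pNorm {p : ℝ} (hp : 0 < p) (f : V → ℝ) (v : V) : |f v| ≤ pNorm p f := by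
  have h2 : |f v| ^ p ≤ ∑ w, |f w| ^ p :=
    Finset.single_le_sum (fun w _ => Real.rpow_nonneg (abs_nonneg _) p) (Finset.mem_univ v)
  calc |f v| = (|f v| ^ p) ^ (1 / p) := by
        rw [one_div, Real.rpow_rpow_inv (abs_nonneg _) hp.ne']
    _ ≤ pNorm p f :=
        Real.rpow_le_rpow (Real.rpow_nonneg (abs_nonneg _) _) h2 (by positivity)

/-- Chebyshev's inequality. -/
lemma cheb {p : ℝ} (hp : 0 < p) (f : V → ℝ) {t : ℝ} (ht : 0 < t) (S : Finset V)
    (hS : ∀ v ∈ S, t ≤ |f v|) : t * (S.card : ℝ) ^ (1 / p) ≤ pNorm p f := by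
  have h1 : t ^ p * (S.card : ℝ) ≤ ∑ v, |f v| ^ p := by
    calc t ^ p * (S.card : ℝ) = ∑ _v ∈ S, t ^ p := by
          rw [Finset.sum_const, nsmul_eq_mul]; ring
      _ ≤ ∑ v ∈ S, |f v| ^ p :=
          Finset.sum_le_sum fun v hv => Real.rpow_le_rpow ht.le (hS v hv) hp.le
      _ ≤ ∑ v, |f v| ^ p := Finset.sum_le_sum_of_subset_of_nonneg (Finset.subset_univ S)
          (fun v _ _ => Real.rpow_nonneg (abs_nonneg _) _)
  calc t * (S.card : ℝ) ^ (1 / p) = (t ^ p * (S.card : ℝ)) ^ (1 / p) := by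
        rw [Real.mul_rpow (Real.rpow_nonneg ht.le _) (Nat.cast_nonneg _), one_div,
          Real.rpow_rpow_inv ht.le hp.ne']
    _ ≤ pNorm p f := Real.rpow_le_rpow (by positivity) h1 (by positivity)

/-- For `p ≤ 1`, the ℓ¹ norm is dominated by the ℓᵖ quasinorm. -/
lemma sum_le_pNorm {p : ℝ} (hp : 0 < p) (hp1 : p ≤ 1) (f : V → ℝ) :
    ∑ v, |f v| ≤ pNorm p f := by
  have key : ∀ s : Finset V, (∑ v ∈ s, |f v|) ^ p ≤ ∑ v ∈ s, |f v| ^ p := by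
    intro s
    induction s using Finset.cons_induction with
    | empty => simp [Real.zero_rpow hp.ne']
    | cons a s ha ih =>
      rw [Finset.sum_cons, Finset.sum_cons]
      have hsum : (0:ℝ) ≤ ∑ v ∈ s, |f v| := Finset.sum_nonneg fun v _ => abs_nonneg _
      have h2 : (|f a| + ∑ v ∈ s, |f v|) ^ p ≤ |f a| ^ p + (∑ v ∈ s, |f v|) ^ p := by
        have h3 := NNReal.rpow_add_le_add_rpow (⟨|f a|, abs_nonneg _⟩ : NNReal)
          (⟨∑ v ∈ s, |f v|, hsum⟩ : NNReal) hp.le hp1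
        exact_mod_cast h3
      linarith
  calc ∑ v, |f v| = ((∑ v, |f v|) ^ p) ^ (1 / p) := by
        rw [one_div, Real.rpow_rpow_inv (Finset.sum_nonneg fun v _ => abs_nonneg _) hp.ne']
    _ ≤ pNorm p f := Real.rpow_le_rpow
        (Real.rpow_nonneg (Finset.sum_nonneg fun v _ => abs_nonneg _) _)
        (key Finset.univ) (by positivity)

/-- For `1 ≤ p`, power mean inequality. -/
lemma sum_le_pNorm' {p : ℝ} (hp1 : 1 ≤ p) (f : V → ℝ) :
    ∑ v, |f v| ≤ (Fintype.card V : ℝ) ^ (1 - 1 / p) * pNorm p f := by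
  have hp : 0 < p := lt_of_lt_of_le one_pos hp1
  have key := Real.rpow_sum_le_const_mul_sum_rpow (s := Finset.univ) f hp1
  have hN : (0:ℝ) ≤ (Fintype.card V : ℝ) := Nat.cast_nonneg _
  calc ∑ v, |f v| = ((∑ v, |f v|) ^ p) ^ (1 / p) := by
        rw [one_div, Real.rpow_rpow_inv (Finset.sum_nonneg fun v _ => abs_nonneg _) hp.ne']
    _ ≤ ((Fintype.card V : ℝ) ^ (p - 1) * ∑ v, |f v| ^ p) ^ (1 / p) := by
        refine Real.rpow_le_rpow (by positivity) ?_ (by positivity)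
        simpa [Finset.card_univ] using key
    _ = ((Fintype.card V : ℝ) ^ (p - 1)) ^ (1 / p) * pNorm p f := by
        rw [pNorm, Real.mul_rpow (by positivity)
          (Finset.sum_nonneg fun v _ => Real.rpow_nonneg (abs_nonneg _) _)]
    _ = (Fintype.card V : ℝ) ^ (1 - 1 / p) * pNorm p f := by
        rw [← Real.rpow_mul hN]
        congr 1
        field_simp

lemma wNorm_term_le {p : ℝ} (hp : 0 < p) (g : V → ℝ) {t : ℝ} (ht : 0 < t) :
    t * ((Finset.univ.filter fun v => t < |g v|).card : ℝ) ^ (1 / p) ≤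
      (∑ v, |g v|) * (Fintype.card V : ℝ) ^ (1 / p) := by
  set S := Finset.univ.filter fun v => t < |g v| with hSdef
  have hsum : (0:ℝ) ≤ ∑ v, |g v| := Finset.sum_nonneg fun v _ => abs_nonneg _
  rcases Finset.eq_empty_or_nonempty S with h | ⟨v, hv⟩
  · rw [h]
    simp only [Finset.card_empty, Nat.cast_zero]
    rw [Real.zero_rpow (by positivity : (1:ℝ) / p ≠ 0), mul_zero]
    positivity
  · have h1 : t ≤ ∑ w, |g w| := le_trans (le_of_lt (Finset.mem_filter.1 hv).2)
      (Finset.single_le_sum (f := fun w => |g w|) (fun w _ => abs_nonneg _) (Finset.mem_univ v))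
    have h2 : (S.card : ℝ) ^ (1 / p) ≤ (Fintype.card V : ℝ) ^ (1 / p) := by
      refine Real.rpow_le_rpow (Nat.cast_nonneg _) ?_ (by positivity)
      exact_mod_cast Finset.card_le_univ S
    exact mul_le_mul h1 h2 (by positivity) hsum

lemma wNorm_le {p : ℝ} (hp : 0 < p) (g : V → ℝ) {B : ℝ}
    (h : ∀ t : ℝ, 0 < t →
      t * ((Finset.univ.filter fun v => t < |g v|).card : ℝ) ^ (1 / p) ≤ B) :
    wNorm p g ≤ B := by
  haveI : Nonempty {t : ℝ // 0 < t} := ⟨⟨1, one_pos⟩⟩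
  exact ciSup_le fun t => h t.1 t.2

lemma le_wNorm {p : ℝ} (hp : 0 < p) (g : V → ℝ) {t : ℝ} (ht : 0 < t) :
    t * ((Finset.univ.filter fun v => t < |g v|).card : ℝ) ^ (1 / p) ≤ wNorm p g := by
  refine le_ciSup (f := fun t : {t : ℝ // 0 < t} =>
    t.1 * ((Finset.univ.filter fun v => t.1 < |g v|).card : ℝ) ^ (1 / p)) ?_ ⟨t, ht⟩
  refine ⟨(∑ v, |g v|) * (Fintype.card V : ℝ) ^ (1 / p), ?_⟩
  rintro x ⟨s, rfl⟩
  exact wNorm_term_le hp g s.2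

lemma le_wNorm_of_count {p : ℝ} (hp : 0 < p) (g : V → ℝ) {c m : ℝ} (hc : 0 < c) (hm : 0 < m)
    (h : ∀ t : ℝ, 0 < t → t < c →
      m ≤ ((Finset.univ.filter fun v => t < |g v|).card : ℝ)) :
    c * m ^ (1 / p) ≤ wNorm p g := by
  refine le_of_forall_lt fun s hs => ?_
  have hmp : 0 < m ^ (1 / p) := Real.rpow_pos_of_pos hm _
  set t0 : ℝ := max 0 (s / m ^ (1 / p)) with ht0def
  have ht00 : 0 ≤ t0 := le_max_left _ _
  have ht0c : t0 < c := by
    apply max_lt hc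
    rw [div_lt_iff₀ hmp]
    exact hs
  set t : ℝ := (t0 + c) / 2 with htdef
  have ht1 : 0 < t := by rw [htdef]; linarith
  have ht2 : t < c := by rw [htdef]; linarith
  have ht3 : t0 < t := by rw [htdef]; linarith
  have h4 : s ≤ t0 * m ^ (1 / p) := by
    rcases le_or_gt s 0 with h' | h'
    · exact le_trans h' (mul_nonneg ht00 hmp.le)
    · have h5 : s / m ^ (1 / p) ≤ t0 := le_max_right _ _
      calc s = s / m ^ (1 / p) * m ^ (1 / p) := by field_simp
        _ ≤ t0 * m ^ (1 / p) := mul_le_mul_of_nonneg_right h5 hmp.le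
  have h5 : t0 * m ^ (1 / p) < t * m ^ (1 / p) := mul_lt_mul_of_pos_right ht3 hmp
  have h6 : t * m ^ (1 / p) ≤
      t * ((Finset.univ.filter fun v => t < |g v|).card : ℝ) ^ (1 / p) :=
    mul_le_mul_of_nonneg_left
      (Real.rpow_le_rpow hm.le (h t ht1 ht2) (by positivity)) ht1.le
  have h7 := le_wNorm hp g ht1
  linarith

lemma one_le_rpow_exp {N e : ℝ} (hN : 1 ≤ N) (he : 0 ≤ e) : 1 ≤ N ^ e := by
  calc (1:ℝ) = N ^ (0:ℝ) := (Real.rpow_zero N).symm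
    _ ≤ N ^ e := Real.rpow_le_rpow_of_exponent_le hN he

lemma wNorm_top_le_of_le_one {p : ℝ} (hp : 0 < p) (hp1 : p ≤ 1) [Nonempty V] (f : V → ℝ) :
    wNorm p (maxOp (⊤ : SimpleGraph V) f) ≤
      (Fintype.card V : ℝ) ^ (1 / p - 1) * pNorm p f := by
  set N : ℝ := (Fintype.card V : ℝ) with hNdef
  have hN1 : (1:ℝ) ≤ N := by rw [hNdef]; exact_mod_cast Fintype.card_pos
  have hN0 : (0:ℝ) < N := lt_of_lt_of_le one_pos hN1
  set g := maxOp (⊤ : SimpleGraph V) f with hgdef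
  set A := (∑ w, |f w|) / N with hAdef
  refine wNorm_le hp g fun t ht => ?_
  set S := Finset.univ.filter fun v => t < |g v| with hSdef
  rcases lt_or_ge t A with hA | hA
  · have hcard : (S.card : ℝ) ≤ N := by rw [hNdef]; exact_mod_cast Finset.card_le_univ S
    calc t * (S.card : ℝ) ^ (1 / p) ≤ t * N ^ (1 / p) :=
          mul_le_mul_of_nonneg_left
            (Real.rpow_le_rpow (Nat.cast_nonneg _) hcard (by positivity)) ht.le
      _ ≤ A * N ^ (1 / p) := mul_le_mul_of_nonneg_right hA.le (by positivity)
      _ = (∑ w, |f w|) * N ^ (1 / p - 1) := by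
          rw [Real.rpow_sub hN0, Real.rpow_one, hAdef]; ring
      _ ≤ pNorm p f * N ^ (1 / p - 1) :=
          mul_le_mul_of_nonneg_right (sum_le_pNorm hp hp1 f) (by positivity)
      _ = N ^ (1 / p - 1) * pNorm p f := mul_comm _ _
  · have hSf : ∀ v ∈ S, t ≤ |f v| := by
      intro v hv
      have hgv : t < g v := by
        have h' := (Finset.mem_filter.1 hv).2
        rwa [abs_of_nonneg (maxOp_nonneg _ f v)] at h'
      by_contra hlt
      push_neg at hlt
      have hle : g v ≤ max |f v| A := maxOp_top_le f v
      have : g v ≤ t := le_trans hle (max_le hlt.le hA)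
      linarith
    have h1 : (1:ℝ) ≤ N ^ (1 / p - 1) := by
      refine one_le_rpow_exp hN1 ?_
      have : 1 ≤ 1 / p := by rw [le_div_iff₀ hp]; linarith
      linarith
    have h2 := cheb hp f ht S hSf
    nlinarith [pNorm_nonneg p f]

lemma wNorm_top_le_of_one_le {p : ℝ} (hp1 : 1 ≤ p) [Nonempty V] (f : V → ℝ) :
    wNorm p (maxOp (⊤ : SimpleGraph V) f) ≤ pNorm p f := by
  have hp : 0 < p := lt_of_lt_of_le one_pos hp1
  set N : ℝ := (Fintype.card V : ℝ) with hNdef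
  have hN1 : (1:ℝ) ≤ N := by rw [hNdef]; exact_mod_cast Fintype.card_pos
  have hN0 : (0:ℝ) < N := lt_of_lt_of_le one_pos hN1
  set g := maxOp (⊤ : SimpleGraph V) f with hgdef
  set A := (∑ w, |f w|) / N with hAdef
  refine wNorm_le hp g fun t ht => ?_
  set S := Finset.univ.filter fun v => t < |g v| with hSdef
  rcases lt_or_ge t A with hA | hA
  · have hcard : (S.card : ℝ) ≤ N := by rw [hNdef]; exact_mod_cast Finset.card_le_univ S
    have hstep : (∑ w, |f w|) * N ^ (1 / p - 1) ≤ pNorm p f := by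
      have h1 := sum_le_pNorm' hp1 f
      have h2 : (0:ℝ) ≤ N ^ (1 / p - 1) := by positivity
      have h3 : N ^ (1 - 1 / p) * N ^ (1 / p - 1) = 1 := by
        rw [← Real.rpow_add hN0]
        norm_num
      calc (∑ w, |f w|) * N ^ (1 / p - 1)
          ≤ N ^ (1 - 1 / p) * pNorm p f * N ^ (1 / p - 1) :=
            mul_le_mul_of_nonneg_right h1 h2
        _ = N ^ (1 - 1 / p) * N ^ (1 / p - 1) * pNorm p f := by ring
        _ = pNorm p f := by rw [h3, one_mul]
    calc t * (S.card : ℝ) ^ (1 / p) ≤ t * N ^ (1 / p) :=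
          mul_le_mul_of_nonneg_left
            (Real.rpow_le_rpow (Nat.cast_nonneg _) hcard (by positivity)) ht.le
      _ ≤ A * N ^ (1 / p) := mul_le_mul_of_nonneg_right hA.le (by positivity)
      _ = (∑ w, |f w|) * N ^ (1 / p - 1) := by
          rw [Real.rpow_sub hN0, Real.rpow_one, hAdef]; ring
      _ ≤ pNorm p f := hstep
  · have hSf : ∀ v ∈ S, t ≤ |f v| := by
      intro v hv
      have hgv : t < g v := by
        have h' := (Finset.mem_filter.1 hv).2
        rwa [abs_of_nonneg (maxOp_nonneg _ f v)] at h'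
      by_contra hlt
      push_neg at hlt
      have hle : g v ≤ max |f v| A := maxOp_top_le f v
      have : g v ≤ t := le_trans hle (max_le hlt.le hA)
      linarith
    exact cheb hp f ht S hSf

lemma wNorm_maxOp_le {p : ℝ} (hp : 0 < p) (G : SimpleGraph V) [Nonempty V] (f : V → ℝ) :
    wNorm p (maxOp G f) ≤
      ((Fintype.card V : ℝ) ^ 2 * (Fintype.card V : ℝ) ^ (1 / p)) * pNorm p f := by
  set N : ℝ := (Fintype.card V : ℝ) with hNdef
  refine wNorm_le hp _ fun t ht => ?_
  refine le_trans (wNorm_term_le hp _ ht) ?_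
  have h1 : ∀ v, |maxOp G f v| ≤ N * pNorm p f := by
    intro v
    rw [abs_of_nonneg (maxOp_nonneg G f v)]
    refine le_trans (maxOp_le_sum G f v) ?_
    calc ∑ w, |f w| ≤ ∑ _w : V, pNorm p f :=
          Finset.sum_le_sum fun w _ => abs_le_pNorm hp f w
      _ = N * pNorm p f := by rw [Finset.sum_const, Finset.card_univ, nsmul_eq_mul]
  have h2 : ∑ v, |maxOp G f v| ≤ N * (N * pNorm p f) := by
    calc ∑ v, |maxOp G f v| ≤ ∑ _v : V, N * pNorm p f :=
          Finset.sum_le_sum fun v _ => h1 v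
      _ = N * (N * pNorm p f) := by rw [Finset.sum_const, Finset.card_univ, nsmul_eq_mul]
  calc (∑ v, |maxOp G f v|) * N ^ (1 / p)
      ≤ N * (N * pNorm p f) * N ^ (1 / p) :=
        mul_le_mul_of_nonneg_right h2 (by positivity)
    _ = (N ^ 2 * N ^ (1 / p)) * pNorm p f := by ring

lemma bddAbove_ratio {p : ℝ} (hp : 0 < p) (G : SimpleGraph V) [Nonempty V] :
    BddAbove (Set.range fun f : {f : V → ℝ // f ≠ 0} =>
      wNorm p (maxOp G f.1) / pNorm p f.1) := by
  refine ⟨(Fintype.card V : ℝ) ^ 2 * (Fintype.card V : ℝ) ^ (1 / p), ?_⟩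
  rintro x ⟨f, rfl⟩
  rw [div_le_iff₀ (pNorm_pos hp f.2)]
  exact wNorm_maxOp_le hp G f.1

lemma lower_bounds {p : ℝ} (hp : 0 < p) {G : SimpleGraph V} (hG : G.Connected) [Nonempty V] :
    ((Fintype.card V : ℝ))⁻¹ * (Fintype.card V : ℝ) ^ (1 / p) ≤ wOpNorm G p ∧
      1 ≤ wOpNorm G p := by
  obtain ⟨x0⟩ := ‹Nonempty V›
  set δ := kdelta x0 with hδdef
  set g := maxOp G δ with hgdef
  have hδ0 : δ ≠ 0 := kdelta_ne_zero x0
  have hnorm : pNorm p δ = 1 := pNorm_kdelta hp.ne' x0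
  have hkey : wNorm p g ≤ wOpNorm G p := by
    have h := le_ciSup (bddAbove_ratio hp G) (⟨δ, hδ0⟩ : {f : V → ℝ // f ≠ 0})
    rw [wOpNorm]
    simpa [hnorm] using h
  have hNpos : (0:ℝ) < (Fintype.card V : ℝ) := by exact_mod_cast Fintype.card_pos
  constructor
  · refine le_trans ?_ hkey
    refine le_wNorm_of_count hp g (by positivity) hNpos ?_
    intro t ht htc
    have hall : ∀ v, t < |g v| := by
      intro v
      rw [abs_of_nonneg (maxOp_nonneg G δ v)]
      refine lt_of_lt_of_le htc ?_
      have h := avg_le_maxOp hG δ v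
      rwa [sum_abs_kdelta, one_div] at h
    rw [Finset.filter_true_of_mem (fun v _ => hall v), Finset.card_univ]
  · refine le_trans ?_ hkey
    have h := le_wNorm_of_count hp g one_pos one_pos ?_
    · simpa using h
    · intro t ht htc
      have hx : t < |g x0| := by
        rw [abs_of_nonneg (maxOp_nonneg G δ x0)]
        refine lt_of_lt_of_le htc ?_
        have h2 := abs_le_maxOp hG δ x0
        rwa [abs_kdelta, if_pos rfl] at h2
      have hmem : x0 ∈ Finset.univ.filter fun v => t < |g v| := by
        simp only [Finset.mem_filter, Finset.mem_univ, true_and]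
        exact hx
      have : 1 ≤ (Finset.univ.filter fun v => t < |g v|).card :=
        Finset.card_pos.2 ⟨x0, hmem⟩
      exact_mod_cast this

lemma wOpNorm_top_le_of_le_one {p : ℝ} (hp : 0 < p) (hp1 : p ≤ 1) [Nonempty V] :
    wOpNorm (⊤ : SimpleGraph V) p ≤ (Fintype.card V : ℝ) ^ (1 / p - 1) := by
  haveI : Nonempty {f : V → ℝ // f ≠ 0} :=
    ⟨⟨kdelta (Classical.arbitrary V), kdelta_ne_zero _⟩⟩
  refine ciSup_le fun f => ?_
  rw [div_le_iff₀ (pNorm_pos hp f.2)]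
  exact wNorm_top_le_of_le_one hp hp1 f.1

lemma wOpNorm_top_le_of_one_le {p : ℝ} (hp1 : 1 ≤ p) [Nonempty V] :
    wOpNorm (⊤ : SimpleGraph V) p ≤ 1 := by
  haveI : Nonempty {f : V → ℝ // f ≠ 0} :=
    ⟨⟨kdelta (Classical.arbitrary V), kdelta_ne_zero _⟩⟩
  refine ciSup_le fun f => ?_
  rw [div_le_iff₀ (pNorm_pos (lt_of_lt_of_le one_pos hp1) f.2), one_mul]
  exact wNorm_top_le_of_one_le hp1 f.1

end Stmt14Aux

/-- weak-type norms for the complete graph, and the resulting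
lower bounds for arbitrary connected graphs. -/
theorem stmt14 (n : ℕ) (hn : 2 ≤ n) (p : ℝ) (hp : 0 < p) :
    (p ≤ 1 → wOpNorm (⊤ : SimpleGraph (Fin n)) p = (n : ℝ) ^ (1 / p - 1)) ∧
    (1 ≤ p → wOpNorm (⊤ : SimpleGraph (Fin n)) p = 1) ∧
    (∀ G : SimpleGraph (Fin n), G.Connected →
      (p ≤ 1 → (n : ℝ) ^ (1 / p - 1) ≤ wOpNorm G p) ∧
      (1 ≤ p → 1 ≤ wOpNorm G p)) := by
  haveI : Nonempty (Fin n) := ⟨⟨0, by omega⟩⟩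
  have hNpos : (0:ℝ) < (n:ℝ) := by exact_mod_cast (by omega : 0 < n)
  have hconv : ((n:ℝ))⁻¹ * (n:ℝ) ^ (1 / p) = (n:ℝ) ^ (1 / p - 1) := by
    rw [Real.rpow_sub hNpos, Real.rpow_one]; ring
  have lower : ∀ G : SimpleGraph (Fin n), G.Connected →
      ((n:ℝ) ^ (1 / p - 1) ≤ wOpNorm G p ∧ 1 ≤ wOpNorm G p) := by
    intro G hG
    obtain ⟨h1, h2⟩ := Stmt14Aux.lower_bounds hp hG
    simp only [Fintype.card_fin] at h1
    rw [hconv] at h1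
    exact ⟨h1, h2⟩
  refine ⟨?_, ?_, fun G hG => ⟨fun _ => (lower G hG).1, fun _ => (lower G hG).2⟩⟩
  · intro hp1
    refine le_antisymm ?_ (lower ⊤ SimpleGraph.connected_top).1
    have h := Stmt14Aux.wOpNorm_top_le_of_le_one (V := Fin n) hp hp1
    simpa [Fintype.card_fin] using h
  · intro hp1
    exact le_antisymm (Stmt14Aux.wOpNorm_top_le_of_one_le (V := Fin n) hp1)
      (lower ⊤ SimpleGraph.connected_top).2
end
end

section
/- (Vitali covering lemma for graphs) Let G be a finite simple connected graph with vertex set V, let A ⊆ V, and let {B_j}_{j∈J} be a finite collection of balls of G (each B_j = B_G(x_j, r_j) for some center x_j ∈ V and radius r_j ∈ ℕ) covering A. Then there exists a subset I ⊆ J such that the balls {B_i}_{i∈I} are pairwise disjoint and |A| ≤ 𝒟(G)·Σ_{i∈I} |B_i|. -/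
open scoped Classical
open Finset

noncomputable section

variable {V : Type*} [Fintype V]

lemma mem_gBall {G : SimpleGraph V} {v w : V} {r : ℕ} :
    w ∈ gBall G v r ↔ G.dist v w ≤ r := by simp [gBall]

lemma center_mem_gBall (G : SimpleGraph V) (v : V) (r : ℕ) : v ∈ gBall G v r := by
  simp [mem_gBall, SimpleGraph.dist_self]

lemma dist_le_gDiam (G : SimpleGraph V) (v w : V) : G.dist v w ≤ gDiam G :=
  Finset.le_sup (f := fun p : V × V => G.dist p.1 p.2) (Finset.mem_univ (v, w))

lemma gBall_subset_of_inter {G : SimpleGraph V} (hG : G.Connected) {ι : Type*}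
    {x : ι → V} {r : ι → ℕ} {k j : ι}
    (h : ¬ Disjoint (gBall G (x k) (r k)) (gBall G (x j) (r j)))
    (hr : r k ≤ r j) : gBall G (x k) (r k) ⊆ gBall G (x j) (3 * r j) := by
  obtain ⟨y, hy⟩ := Finset.not_disjoint_iff.mp h
  intro w hw
  rw [mem_gBall] at *
  have h1 : G.dist (x j) w ≤ G.dist (x j) y + G.dist y (x k) + G.dist (x k) w := by
    calc G.dist (x j) w ≤ G.dist (x j) (x k) + G.dist (x k) w := hG.dist_triangle
    _ ≤ (G.dist (x j) y + G.dist y (x k)) + G.dist (x k) w :=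
        add_le_add_left hG.dist_triangle _
  have h2 : G.dist y (x k) ≤ r k := by rw [SimpleGraph.dist_comm]; exact hy.1
  have h3 : G.dist (x j) y ≤ r j := mem_gBall.mp hy.2
  omega

lemma gBall_card_pos (G : SimpleGraph V) (v : V) (r : ℕ) :
    (0 : ℝ) < (gBall G v r).card := by
  exact_mod_cast Finset.card_pos.mpr ⟨v, center_mem_gBall G v r⟩

lemma three_ball_card_le (G : SimpleGraph V) (v : V) {r : ℕ} (hr : r ≤ gDiam G) :
    ((gBall G v (3 * r)).card : ℝ) ≤ dilIndex G * ((gBall G v r).card : ℝ) := by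
  have hpos := gBall_card_pos G v r
  have key : ((gBall G v (3 * r)).card : ℝ) / ((gBall G v r).card : ℝ) ≤ dilIndex G := by
    have hb1 : BddAbove (Set.range fun rr : {r : ℕ // r ≤ gDiam G} =>
        ((gBall G v (3 * rr.1)).card : ℝ) / ((gBall G v rr.1).card : ℝ)) :=
      (Set.finite_range _).bddAbove
    have hb2 : BddAbove (Set.range fun x : V => ⨆ rr : {r : ℕ // r ≤ gDiam G},
        ((gBall G x (3 * rr.1)).card : ℝ) / ((gBall G x rr.1).card : ℝ)) :=
      (Set.finite_range _).bddAbove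
    calc ((gBall G v (3 * r)).card : ℝ) / ((gBall G v r).card : ℝ)
        ≤ ⨆ rr : {r : ℕ // r ≤ gDiam G},
            ((gBall G v (3 * rr.1)).card : ℝ) / ((gBall G v rr.1).card : ℝ) :=
          le_ciSup hb1 ⟨r, hr⟩
      _ ≤ dilIndex G := le_ciSup hb2 v
  calc ((gBall G v (3 * r)).card : ℝ)
      = ((gBall G v (3 * r)).card : ℝ) / ((gBall G v r).card : ℝ) *
        ((gBall G v r).card : ℝ) := by field_simp
    _ ≤ dilIndex G * ((gBall G v r).card : ℝ) :=
        mul_le_mul_of_nonneg_right key hpos.le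

lemma vitali_aux {G : SimpleGraph V} (hG : G.Connected) {ι : Type*}
    (x : ι → V) (r : ι → ℕ) :
    ∀ n (J : Finset ι), J.card ≤ n → ∃ I ⊆ J,
      (∀ i ∈ I, ∀ k ∈ I, i ≠ k → Disjoint (gBall G (x i) (r i)) (gBall G (x k) (r k))) ∧
      ∀ a : V, (∃ j ∈ J, a ∈ gBall G (x j) (r j)) →
        ∃ i ∈ I, a ∈ gBall G (x i) (3 * r i) := by
  intro n
  induction n with
  | zero =>
    intro J hJ
    refine ⟨∅, Finset.empty_subset _, by simp, ?_⟩
    have : J = ∅ := Finset.card_eq_zero.mp (Nat.le_zero.mp hJ)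
    subst this; simp
  | succ n ih =>
    intro J hJ
    rcases J.eq_empty_or_nonempty with rfl | hne
    · exact ⟨∅, Finset.empty_subset _, by simp, by simp⟩
    obtain ⟨j, hjJ, hjmax⟩ := J.exists_max_image r hne
    set J' := J.filter fun k => Disjoint (gBall G (x k) (r k)) (gBall G (x j) (r j)) with hJ'
    have hjnot : j ∉ J' := by
      simp only [hJ', Finset.mem_filter]
      rintro ⟨-, hd⟩
      exact (Finset.not_disjoint_iff.mpr ⟨x j, center_mem_gBall G (x j) (r j),
        center_mem_gBall G (x j) (r j)⟩) hd
    have hJ'card : J'.card ≤ n := by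
      have h1 : J'.card < J.card := Finset.card_lt_card
        ⟨Finset.filter_subset _ _, fun hs => hjnot (hs hjJ)⟩
      omega
    obtain ⟨I', hI'sub, hI'disj, hI'cov⟩ := ih J' hJ'card
    refine ⟨insert j I', ?_, ?_, ?_⟩
    · exact Finset.insert_subset hjJ (hI'sub.trans (Finset.filter_subset _ _))
    · intro i hi k hk hik
      rcases Finset.mem_insert.mp hi with rfl | hi' <;>
        rcases Finset.mem_insert.mp hk with rfl | hk'
      · exact absurd rfl hik
      · exact ((Finset.mem_filter.mp (hI'sub hk')).2).symm
      · exact (Finset.mem_filter.mp (hI'sub hi')).2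
      · exact hI'disj i hi' k hk' hik
    · rintro a ⟨k, hkJ, hka⟩
      by_cases hd : Disjoint (gBall G (x k) (r k)) (gBall G (x j) (r j))
      · obtain ⟨i, hi, hai⟩ := hI'cov a ⟨k, Finset.mem_filter.mpr ⟨hkJ, hd⟩, hka⟩
        exact ⟨i, Finset.mem_insert_of_mem hi, hai⟩
      · exact ⟨j, Finset.mem_insert_self _ _,
          gBall_subset_of_inter hG hd (hjmax k hkJ) hka⟩

/-- Vitali covering lemma for graphs. -/
theorem stmt17 {V : Type*} [Fintype V] {ι : Type*} (G : SimpleGraph V)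
    (hG : G.Connected) (A : Finset V) (J : Finset ι) (x : ι → V) (r : ι → ℕ)
    (hcov : ∀ a ∈ A, ∃ j ∈ J, a ∈ gBall G (x j) (r j)) :
    ∃ I ⊆ J,
      (∀ i ∈ I, ∀ k ∈ I, i ≠ k → Disjoint (gBall G (x i) (r i)) (gBall G (x k) (r k))) ∧
      (A.card : ℝ) ≤ dilIndex G * ∑ i ∈ I, ((gBall G (x i) (r i)).card : ℝ) := by
  set r' : ι → ℕ := fun j => min (r j) (gDiam G) with hr'
  have hball : ∀ j v, gBall G v (r j) = gBall G v (r' j) := by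
    intro j v
    ext w
    simp only [mem_gBall, hr', le_min_iff]
    exact ⟨fun h => ⟨h, dist_le_gDiam G v w⟩, fun h => h.1⟩
  obtain ⟨I, hIsub, hIdisj, hIcov⟩ := vitali_aux hG x r' J.card J le_rfl
  refine ⟨I, hIsub, ?_, ?_⟩
  · intro i hi k hk hik
    rw [hball i, hball k]
    exact hIdisj i hi k hk hik
  · have hAsub : A ⊆ I.biUnion fun i => gBall G (x i) (3 * r' i) := by
      intro a ha
      obtain ⟨j, hj, haj⟩ := hcov a ha
      rw [hball j] at haj
      obtain ⟨i, hi, hai⟩ := hIcov a ⟨j, hj, haj⟩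
      exact Finset.mem_biUnion.mpr ⟨i, hi, hai⟩
    calc (A.card : ℝ) ≤ ((I.biUnion fun i => gBall G (x i) (3 * r' i)).card : ℝ) := by
          exact_mod_cast Finset.card_le_card hAsub
      _ ≤ ∑ i ∈ I, ((gBall G (x i) (3 * r' i)).card : ℝ) := by
          exact_mod_cast Finset.card_biUnion_le
      _ ≤ ∑ i ∈ I, dilIndex G * ((gBall G (x i) (r' i)).card : ℝ) :=
          Finset.sum_le_sum fun i _ => three_ball_card_le G (x i) (min_le_right _ _)
      _ = dilIndex G * ∑ i ∈ I, ((gBall G (x i) (r i)).card : ℝ) := by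
          rw [Finset.mul_sum]
          exact Finset.sum_congr rfl fun i _ => by rw [hball i]
end
end
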